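/- arXiv:2309.01562 — 7 statements merged into one kernel-verified Lean document; each statement's English description precedes it below -/
import Mathlib

section
/- For α < 0 and z < 0, the rational function R(z) = (-(α+2)z² - (2α²+2)z - 2α) / ((2α²-2α)z² + (-2α²+2α-2)z - 2α) satisfies R'(z) > 0, i.e. R is strictly monotonically increasing on (-∞, 0). -/
theorem mprk22_neg_alpha_R_strict_mono (α : ℝ) (hα : α < 0)
    (R : ℝ → ℝ)
    (hR : ∀ z, R z = (-(α+2)*z^2 - (2*α^2+2)*z - 2*α) /
      ((2*α^2-2*α)*z^2 + (-2*α^2+2*α-2)*z - 2*α)) :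
    (∀ z < 0, 0 < deriv R z) ∧ StrictMonoOn R (Set.Iio 0) := by
  have hRe : R = fun z => (-(α+2)*z^2 - (2*α^2+2)*z - 2*α) /
      ((2*α^2-2*α)*z^2 + (-2*α^2+2*α-2)*z - 2*α) := funext hR
  have hA : (0:ℝ) < -α := by linarith
  -- denominator positive for z < 0
  have hDpos : ∀ z : ℝ, z < 0 → 0 < (2*α^2-2*α)*z^2 + (-2*α^2+2*α-2)*z - 2*α := by
    intro z hz
    have h1 : 0 < α*z + 1 := by nlinarith [mul_pos hA (show (0:ℝ) < -z by linarith)]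
    have h2 : 0 < α*z - α - z := by nlinarith [mul_pos hA (show (0:ℝ) < -z by linarith)]
    nlinarith [mul_pos h1 h2]
  have hHas : ∀ z : ℝ, z < 0 → HasDerivAt R
      (((-(α+2)*(2*z) - (2*α^2+2)) * ((2*α^2-2*α)*z^2 + (-2*α^2+2*α-2)*z - 2*α)
        - (-(α+2)*z^2 - (2*α^2+2)*z - 2*α) * ((2*α^2-2*α)*(2*z) + (-2*α^2+2*α-2)))
        / ((2*α^2-2*α)*z^2 + (-2*α^2+2*α-2)*z - 2*α)^2) z := by
    intro z hz
    have hDne : (2*α^2-2*α)*z^2 + (-2*α^2+2*α-2)*z - 2*α ≠ 0 := (hDpos z hz).ne'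
    have hN : HasDerivAt (fun z : ℝ => -(α+2)*z^2 - (2*α^2+2)*z - 2*α)
        (-(α+2)*(2*z) - (2*α^2+2)) z := by
      have h1 := ((hasDerivAt_pow 2 z).const_mul (-(α+2))).sub
        (((hasDerivAt_id z).const_mul (2*α^2+2)))
      have h2 := h1.sub_const (2*α)
      refine h2.congr_deriv ?_
      push_cast
      ring
    have hD : HasDerivAt (fun z : ℝ => (2*α^2-2*α)*z^2 + (-2*α^2+2*α-2)*z - 2*α)
        ((2*α^2-2*α)*(2*z) + (-2*α^2+2*α-2)) z := by
      have h1 := ((hasDerivAt_pow 2 z).const_mul (2*α^2-2*α)).add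
        (((hasDerivAt_id z).const_mul (-2*α^2+2*α-2)))
      have h2 := h1.sub_const (2*α)
      refine h2.congr_deriv ?_
      push_cast
      ring
    rw [hRe]
    exact hN.div hD hDne
  have hderiv : ∀ z < 0, 0 < deriv R z := by
    intro z hz
    rw [(hHas z hz).deriv]
    apply div_pos
    · have hW : (0:ℝ) < -z := by linarith
      nlinarith [mul_pos hA hW, mul_pos (mul_pos hA hW) (mul_pos hA hW),
        mul_pos (mul_pos hA hA) hW, mul_pos hA (mul_pos hW hW),
        mul_pos (mul_pos hA hA) (mul_pos hW hW),
        mul_pos (mul_pos (mul_pos hA hA) hA) (mul_pos hW hW),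
        mul_pos (mul_pos (mul_pos (mul_pos hA hA) hA) hA) (mul_pos hW hW),
        mul_pos (mul_pos hA hA) (mul_pos (mul_pos hA hA) (mul_pos hW hW)),
        mul_pos hA hA, mul_pos hW hW]
    · exact pow_pos (hDpos z hz) 2
  refine ⟨hderiv, ?_⟩
  have hconv : Convex ℝ (Set.Iio (0:ℝ)) := convex_Iio 0
  apply StrictMonoOn.mono (s := Set.Iio 0) ?_ le_rfl
  apply strictMonoOn_of_deriv_pos hconv
  · apply ContinuousOn.congr (f := fun z => (-(α+2)*z^2 - (2*α^2+2)*z - 2*α) /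
      ((2*α^2-2*α)*z^2 + (-2*α^2+2*α-2)*z - 2*α))
    · apply ContinuousOn.div
      · fun_prop
      · fun_prop
      · intro z hz
        exact (hDpos z hz).ne'
    · intro z _
      exact hR z
  · intro z hz
    rw [interior_Iio] at hz
    exact hderiv z hz
end

section
/- For α < 0 and all z < 0, the function R(z) = (-(α+2)z² - (2α²+2)z - 2α) / ((2α²-2α)z² + (-2α²+2α-2)z - 2α) satisfies -(α+2)/(2α(α-1)) < R(z) < 1. -/
theorem mprk22_neg_alpha_R_bounds (α : ℝ) (hα : α < 0)
    (R : ℝ → ℝ)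
    (hR : ∀ z, R z = (-(α+2)*z^2 - (2*α^2+2)*z - 2*α) /
      ((2*α^2-2*α)*z^2 + (-2*α^2+2*α-2)*z - 2*α)) :
    ∀ z < 0, -(α+2)/(2*α*(α-1)) < R z ∧ R z < 1 := by
  intro z hz
  have hD : (0:ℝ) < (2*α^2-2*α)*z^2 + (-2*α^2+2*α-2)*z - 2*α := by
    nlinarith [sq_nonneg z, sq_nonneg α, mul_pos (neg_pos.mpr hα) (neg_pos.mpr hz),
      mul_pos (mul_pos (neg_pos.mpr hα) (neg_pos.mpr hα)) (mul_pos (neg_pos.mpr hz) (neg_pos.mpr hz))]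
  have hd2 : (0:ℝ) < 2*α*(α-1) := by nlinarith
  rw [hR]
  constructor
  · rw [div_lt_div_iff₀ hd2 hD]
    nlinarith [mul_pos (neg_pos.mpr hα) (neg_pos.mpr hz), sq_nonneg (α*z), sq_nonneg α,
      mul_pos (mul_pos (neg_pos.mpr hα) (neg_pos.mpr hα)) (mul_pos (neg_pos.mpr hα) (neg_pos.mpr hα)),
      mul_pos (mul_pos (neg_pos.mpr hα) (neg_pos.mpr hα)) (neg_pos.mpr hα),
      mul_pos (mul_pos (mul_pos (neg_pos.mpr hα) (neg_pos.mpr hα)) (mul_pos (neg_pos.mpr hα) (neg_pos.mpr hα))) (neg_pos.mpr hz),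
      mul_pos (mul_pos (mul_pos (neg_pos.mpr hα) (neg_pos.mpr hα)) (neg_pos.mpr hα)) (neg_pos.mpr hz),
      mul_pos (mul_pos (neg_pos.mpr hα) (neg_pos.mpr hα)) (neg_pos.mpr hz),
      mul_pos (neg_pos.mpr hα) (neg_pos.mpr hα)]
  · rw [div_lt_one hD]
    nlinarith [mul_pos (neg_pos.mpr hα) (neg_pos.mpr hz), sq_nonneg z, sq_nonneg (α*z),
      sq_nonneg (2*z - α*z)]
end

section
/- For every α with α ≤ -1/2 and every z < 0, the function R(z) = (-(α+2)z² - (2α²+2)z - 2α) / ((2α²-2α)z² + (-2α²+2α-2)z - 2α) satisfies |R(z)| < 1. -/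
theorem mprk22_alpha_le_neg_half_abs_R_lt_one (α : ℝ) (hα : α ≤ -(1/2))
    (R : ℝ → ℝ)
    (hR : ∀ z, R z = (-(α+2)*z^2 - (2*α^2+2)*z - 2*α) /
      ((2*α^2-2*α)*z^2 + (-2*α^2+2*α-2)*z - 2*α)) :
    ∀ z < 0, |R z| < 1 := by
  intro z hz
  rw [hR z]
  have hz2 : 0 < z^2 := by nlinarith [pow_pos (neg_pos.mpr hz) 2]
  have hzneg : 0 < -z := neg_pos.mpr hz
  have hD : 0 < (2*α^2-2*α)*z^2 + (-2*α^2+2*α-2)*z - 2*α := by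
    nlinarith [mul_pos (show (0:ℝ) < 2*α^2-2*α by nlinarith) hz2,
      mul_pos (show (0:ℝ) < 2*α^2-2*α+2 by nlinarith) hzneg]
  rw [abs_div, abs_of_pos hD, div_lt_one hD, abs_lt]
  constructor
  · -- D + N > 0
    nlinarith [mul_nonneg (show (0:ℝ) ≤ (2*α+1)*(α-2) by nlinarith) hz2.le,
      mul_pos (show (0:ℝ) < 4*α^2-2*α+4 by nlinarith) hzneg]
  · -- D - N > 0
    nlinarith [mul_pos hzneg
      (show (0:ℝ) < -((2*α^2-α+2)*z) - 2*α by
        nlinarith [mul_pos (show (0:ℝ) < 2*α^2-α+2 by nlinarith) hzneg])]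
end

section
/- For every α with -1/2 < α < 0 there exists z < 0 such that |R(z)| > 1, where R(z) = (-(α+2)z² - (2α²+2)z - 2α) / ((2α²-2α)z² + (-2α²+2α-2)z - 2α). Concretely, R(z*) = -1 for z* = (2α² - α + 2 + √(4α⁴ + 4α³ - 3α² - 12α + 4)) / (2α² - 3α - 2), and |R(z)| > 1 for z < z*. -/
theorem mprk22_neg_half_lt_alpha_conditional (α : ℝ) (hα₁ : -(1/2) < α) (hα₂ : α < 0)
    (R : ℝ → ℝ)
    (hR : ∀ z, R z = (-(α+2)*z^2 - (2*α^2+2)*z - 2*α) /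
      ((2*α^2-2*α)*z^2 + (-2*α^2+2*α-2)*z - 2*α)) :
    (∃ z < 0, 1 < |R z|) ∧
    R ((2*α^2 - α + 2 + Real.sqrt (4*α^4 + 4*α^3 - 3*α^2 - 12*α + 4)) /
        (2*α^2 - 3*α - 2)) = -1 ∧
    ∀ z < (2*α^2 - α + 2 + Real.sqrt (4*α^4 + 4*α^3 - 3*α^2 - 12*α + 4)) /
        (2*α^2 - 3*α - 2), 1 < |R z| := by
  have hD : 0 < 4*α^4 + 4*α^3 - 3*α^2 - 12*α + 4 := by
    nlinarith [sq_nonneg α, sq_nonneg (α+1), sq_nonneg (2*α+1), sq_nonneg (α*(2*α+1)),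
      sq_nonneg (α^2+α)]
  set s : ℝ := Real.sqrt (4*α^4 + 4*α^3 - 3*α^2 - 12*α + 4) with hs
  have hs_pos : 0 < s := Real.sqrt_pos.mpr hD
  have hs2 : s^2 = 4*α^4 + 4*α^3 - 3*α^2 - 12*α + 4 := Real.sq_sqrt hD.le
  have hA : 2*α^2 - 3*α - 2 < 0 := by nlinarith
  set z₀ : ℝ := (2*α^2 - α + 2 + s) / (2*α^2 - 3*α - 2) with hz₀
  have hc_pos : (0:ℝ) < 2*α^2 - α + 2 + s := by nlinarith
  have hz₀neg : z₀ < 0 := div_neg_of_pos_of_neg hc_pos hA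
  -- denominator is positive for z < 0
  have hQ : ∀ z : ℝ, z < 0 → 0 < (2*α^2-2*α)*z^2 + (-2*α^2+2*α-2)*z - 2*α := by
    intro z hz
    nlinarith [sq_nonneg z, mul_pos (neg_pos.mpr hz) (neg_pos.mpr hα₂),
      mul_pos (mul_pos (neg_pos.mpr hz) (neg_pos.mpr hz)) (neg_pos.mpr hα₂)]
  -- key: z₀ satisfies A z₀ = c + s
  have hAz₀ : (2*α^2 - 3*α - 2) * z₀ = 2*α^2 - α + 2 + s := by
    rw [hz₀]; exact mul_div_cancel₀ _ (ne_of_lt hA)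
  -- R z < -1 for all z < z₀
  have main : ∀ z, z < z₀ → R z < -1 := by
    intro z hz
    have hzneg : z < 0 := lt_trans hz hz₀neg
    have hQz := hQ z hzneg
    have hAz : 2*α^2 - α + 2 + s < (2*α^2 - 3*α - 2) * z := by
      have h := (lt_div_iff_of_neg hA).mp (hz.trans_eq hz₀)
      nlinarith [h]
    -- E = N + Q;  A * E = (A z - c)^2 - s^2 > 0, hence E < 0
    have hE : (2*α^2-3*α-2)*z^2 - (4*α^2-2*α+4)*z - 4*α < 0 := by
      have hprod : 0 < ((2*α^2-3*α-2)*z - (2*α^2-α+2) - s) *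
          ((2*α^2-3*α-2)*z - (2*α^2-α+2) + s) := by
        apply mul_pos <;> nlinarith
      have hid : (2*α^2-3*α-2) * ((2*α^2-3*α-2)*z^2 - (4*α^2-2*α+4)*z - 4*α)
          = ((2*α^2-3*α-2)*z - (2*α^2-α+2) - s) *
            ((2*α^2-3*α-2)*z - (2*α^2-α+2) + s) := by
        linear_combination hs2
      nlinarith
    rw [hR z, div_lt_iff₀ hQz]
    nlinarith [hE]
  have hmain' : ∀ z, z < z₀ → 1 < |R z| := by
    intro z hz
    have := main z hz
    rw [abs_of_neg (by linarith)]; linarith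
  refine ⟨⟨z₀ - 1, by linarith, hmain' _ (by linarith)⟩, ?_, hmain'⟩
  -- R z₀ = -1
  have hQz₀ := hQ z₀ hz₀neg
  rw [hR z₀, div_eq_iff (ne_of_gt hQz₀)]
  have hE0 : (2*α^2-3*α-2)*z₀^2 - (4*α^2-2*α+4)*z₀ - 4*α = 0 := by
    have h1 : (2*α^2-3*α-2) * ((2*α^2-3*α-2)*z₀^2 - (4*α^2-2*α+4)*z₀ - 4*α)
        = ((2*α^2-3*α-2)*z₀ - (2*α^2-α+2) - s) *
          ((2*α^2-3*α-2)*z₀ - (2*α^2-α+2) + s) := by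
      linear_combination hs2
    have h2 : (2*α^2-3*α-2)*z₀ - (2*α^2-α+2) - s = 0 := by linarith [hAz₀]
    have := h1
    rw [h2, zero_mul] at this
    exact (mul_eq_zero.mp this).resolve_left (ne_of_lt hA)
  nlinarith [hE0]
end

section
/- For every complex number z with Re(z) < 0 and every real α ≥ 1/2, the stability function R(z) = (-z² - 2αz + 2) / (2(1 - αz)(1 - z)) satisfies |R(z)| < 1. -/
theorem mprk22_A_stability (α : ℝ) (hα : 1/2 ≤ α) (z : ℂ) (hz : z.re < 0) :
    ‖(-z^2 - 2*(α:ℂ)*z + 2) / (2*(1 - (α:ℂ)*z)*(1 - z))‖ < 1 := by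
  set x := z.re with hx
  set y := z.im with hy
  have hα0 : (0:ℝ) < α := by linarith
  have h1 : (1 - (α:ℂ)*z) ≠ 0 := by
    intro h
    have := congrArg Complex.re h
    simp [Complex.mul_re] at this
    nlinarith [mul_pos hα0 (neg_pos.mpr hz)]
  have h2 : (1 - z) ≠ 0 := by
    intro h
    have := congrArg Complex.re h
    simp at this
    linarith
  have hD : (2*(1 - (α:ℂ)*z)*(1 - z)) ≠ 0 := by
    apply mul_ne_zero (mul_ne_zero two_ne_zero h1) h2
  have hDpos : 0 < ‖(2*(1 - (α:ℂ)*z)*(1 - z))‖ :=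
    norm_pos_iff.mpr hD
  rw [norm_div, div_lt_one hDpos]
  refine lt_of_pow_lt_pow_left₀ 2 (norm_nonneg _) ?_
  rw [Complex.sq_norm, Complex.sq_norm]
  simp only [Complex.normSq_apply, Complex.sub_re, Complex.sub_im, Complex.add_re,
    Complex.add_im, Complex.mul_re, Complex.mul_im, Complex.ofReal_re, Complex.ofReal_im,
    Complex.one_re, Complex.one_im, Complex.neg_re, Complex.neg_im, Complex.re_ofNat,
    Complex.im_ofNat, pow_two, ← hx, ← hy]
  have hxneg : 0 < -x := neg_pos.mpr hz
  have ha1 : (0:ℝ) ≤ 4*α^2 - 1 := by nlinarith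
  nlinarith [mul_nonneg ha1 (sq_nonneg (x^2 + y^2)),
    mul_nonneg (mul_nonneg (mul_nonneg (le_of_lt hα0) (by linarith : (0:ℝ) ≤ 3 + 2*α)) (le_of_lt hxneg)) (add_nonneg (sq_nonneg x) (sq_nonneg y)),
    mul_pos hxneg hxneg, mul_nonneg (le_of_lt hα0) (mul_nonneg (le_of_lt hxneg) (le_of_lt hxneg))]
end

section
/- For real α with 0 < α < 1/2, let z* = (-2α² + 3α - 2 - √(4α⁴ + 12α³ - 11α² - 4α + 4)) / (6α² - 7α + 2). Then z* < 0 and the stability function R(z) = -(1 + (2 - 5/(2α) + 1/α²)z - (3/(2α) - 1/α²)·z/(-1 + αz)) / (-1 + (-1 + 1/α)z) satisfies |R(z*)| ≥ 1; in particular R(z*) = -1. -/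
theorem mprk22_pos_alpha_lt_half_conditional (α : ℝ) (hα₁ : 0 < α) (hα₂ : α < 1/2)
    (R : ℝ → ℝ)
    (hR : ∀ z, R z = -(1 + (2 - 5/(2*α) + 1/α^2)*z - (3/(2*α) - 1/α^2) * (z/(-1 + α*z))) /
      (-1 + (-1 + 1/α)*z)) :
    let zstar := (-2*α^2 + 3*α - 2 - Real.sqrt (4*α^4 + 12*α^3 - 11*α^2 - 4*α + 4)) /
      (6*α^2 - 7*α + 2)
    zstar < 0 ∧ 1 ≤ |R zstar| ∧ R zstar = -1 := by
  intro zstar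
  have hαne : α ≠ 0 := ne_of_gt hα₁
  have key : ∀ z : ℝ, (6*α^2 - 7*α + 2) * z^2 + (4*α^2 - 6*α + 4) * z - 4*α = 0 →
      -1 + α * z ≠ 0 → -1 + (-1 + 1/α) * z ≠ 0 →
      -(1 + (2 - 5/(2*α) + 1/α^2)*z - (3/(2*α) - 1/α^2) * (z/(-1 + α*z))) /
        (-1 + (-1 + 1/α)*z) = -1 := by
    intro z hq h1 h2
    rw [div_eq_iff h2]
    field_simp
    ring_nf
    linear_combination (-α) * hq
  set D : ℝ := 4*α^4 + 12*α^3 - 11*α^2 - 4*α + 4 with hDdef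
  have hD : 0 ≤ D := by
    nlinarith [sq_nonneg (α - 1/4), sq_nonneg α, sq_nonneg (α^2 + 2*α - 1), sq_nonneg (α^2 - α)]
  set s : ℝ := Real.sqrt D with hsdef
  have hs0 : 0 ≤ s := Real.sqrt_nonneg D
  have hs2 : s^2 = D := Real.sq_sqrt hD
  have ha : 0 < 6*α^2 - 7*α + 2 := by nlinarith
  have hane : (6*α^2 - 7*α + 2) ≠ 0 := ne_of_gt ha
  have hnum : -2*α^2 + 3*α - 2 - s < 0 := by nlinarith
  have hz0 : zstar < 0 := div_neg_of_neg_of_pos hnum ha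
  have hz : (6*α^2 - 7*α + 2) * zstar^2 + (4*α^2 - 6*α + 4) * zstar - 4*α = 0 := by
    show (6*α^2 - 7*α + 2) * ((-2*α^2 + 3*α - 2 - s)/(6*α^2 - 7*α + 2))^2
      + (4*α^2 - 6*α + 4) * ((-2*α^2 + 3*α - 2 - s)/(6*α^2 - 7*α + 2)) - 4*α = 0
    field_simp
    rw [sub_eq_zero, div_eq_iff (by intro h; apply hane; linear_combination h)]
    linear_combination hs2 + hDdef
  have h1 : -1 + α * zstar ≠ 0 := by nlinarith [mul_neg_of_pos_of_neg hα₁ hz0]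
  have h2 : -1 + (-1 + 1/α) * zstar ≠ 0 := by
    have : 1/α > 2 := by rw [gt_iff_lt, lt_div_iff₀ hα₁]; linarith
    nlinarith [mul_neg_of_pos_of_neg (by linarith : (0:ℝ) < -1 + 1/α) hz0]
  have hRz : R zstar = -1 := by rw [hR]; exact key zstar hz h1 h2
  exact ⟨hz0, by rw [hRz]; norm_num, hRz⟩
end

section
/- For α ≥ 1/2 and real z < 0, the stability function R(z) = (-z² - 2αz + 2)/(2(1 - αz)(1 - z)) satisfies -1 < R(z) < 1. -/
theorem mprk22_R_bounds_neg_real (α : ℝ) (hα : 1/2 ≤ α) (z : ℝ) (hz : z < 0) :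
    -1 < (-z^2 - 2*α*z + 2) / (2*(1 - α*z)*(1 - z)) ∧
    (-z^2 - 2*α*z + 2) / (2*(1 - α*z)*(1 - z)) < 1 := by
  have hαz : α*z < 0 := mul_neg_of_pos_of_neg (by linarith) hz
  have hD : 0 < 2*(1 - α*z)*(1 - z) := by nlinarith
  constructor
  · rw [lt_div_iff₀ hD]; nlinarith
  · rw [div_lt_iff₀ hD]; nlinarith
end
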